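/- Let F be a field of characteristic p > 0 and a_1, ..., a_n ∈ F*. For any field extension L/F, the value set of the quasi-Pfister form ⟨⟨a_1,...,a_n⟩⟩ over L equals the subfield L^p(a_1,...,a_n) of L. -/

import Mathlib

/-- The quasi-Pfister form ⟨⟨a_1,...,a_n⟩⟩. -/
def pfisterForm (p : ℕ) {F : Type*} [Field F] {n : ℕ} (a : Fin n → F)
    (x : (Fin n → Fin p) → F) : F :=
  ∑ j : Fin n → Fin p, (∏ i, a i ^ (j i : ℕ)) * x j ^ p


set_option linter.unusedSectionVars false
section aux

variable {L : Type*} [Field L] (p : ℕ) [Fact p.Prime] [CharP L p] {n : ℕ} (b : Fin n → L)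

theorem pf_add (x y : (Fin n → Fin p) → L) :
    pfisterForm p b (x + y) = pfisterForm p b x + pfisterForm p b y := by
  unfold pfisterForm
  rw [← Finset.sum_add_distrib]
  refine Finset.sum_congr rfl fun j _ => ?_
  rw [Pi.add_apply, add_pow_char, mul_add]

theorem pf_zero : pfisterForm p b 0 = 0 := by
  unfold pfisterForm
  simp [zero_pow (Fact.out : p.Prime).ne_zero]

theorem pf_neg (x : (Fin n → Fin p) → L) : pfisterForm p b (-x) = -pfisterForm p b x := by
  unfold pfisterForm
  rw [← Finset.sum_neg_distrib]
  refine Finset.sum_congr rfl fun j _ => ?_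
  rw [Pi.neg_apply, neg_pow, neg_one_pow_char L]
  ring

theorem pf_single (r : Fin n → Fin p) (c : L) :
    (∏ i, b i ^ (r i : ℕ)) * c ^ p ∈ Set.range (pfisterForm p b) := by
  classical
  refine ⟨Pi.single r c, ?_⟩
  unfold pfisterForm
  rw [Finset.sum_eq_single r]
  · rw [Pi.single_eq_same]
  · intro j _ hj
    rw [Pi.single_eq_of_ne hj, zero_pow (Fact.out : p.Prime).ne_zero, mul_zero]
  · intro h; exact absurd (Finset.mem_univ r) h

theorem pf_add_mem {u v : L} (hu : u ∈ Set.range (pfisterForm p b))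
    (hv : v ∈ Set.range (pfisterForm p b)) : u + v ∈ Set.range (pfisterForm p b) := by
  obtain ⟨x, rfl⟩ := hu; obtain ⟨y, rfl⟩ := hv
  exact ⟨x + y, pf_add p b x y⟩

theorem pf_sum_mem {ι : Type*} (s : Finset ι) (f : ι → L)
    (h : ∀ i ∈ s, f i ∈ Set.range (pfisterForm p b)) :
    ∑ i ∈ s, f i ∈ Set.range (pfisterForm p b) := by
  classical
  induction s using Finset.induction with
  | empty => simpa using ⟨0, pf_zero p b⟩
  | insert _ _ hx ih =>
    rw [Finset.sum_insert hx]
    exact pf_add_mem p b (h _ (Finset.mem_insert_self _ _))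
      (ih fun i hi => h i (Finset.mem_insert_of_mem hi))

theorem pf_pow_mem (c : L) : c ^ p ∈ Set.range (pfisterForm p b) := by
  haveI : NeZero p := ⟨(Fact.out : p.Prime).ne_zero⟩
  have := pf_single p b (fun _ => 0) c
  simpa using this

theorem pf_mul_mem {u v : L} (hu : u ∈ Set.range (pfisterForm p b))
    (hv : v ∈ Set.range (pfisterForm p b)) : u * v ∈ Set.range (pfisterForm p b) := by
  haveI : NeZero p := ⟨(Fact.out : p.Prime).ne_zero⟩
  have hp : 0 < p := (Fact.out : p.Prime).pos
  obtain ⟨x, rfl⟩ := hu; obtain ⟨y, rfl⟩ := hv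
  unfold pfisterForm
  rw [Finset.sum_mul_sum]
  refine pf_sum_mem p b _ _ fun j _ => pf_sum_mem p b _ _ fun k _ => ?_
  set r : Fin n → Fin p := fun i => ⟨((j i : ℕ) + (k i : ℕ)) % p, Nat.mod_lt _ hp⟩ with hr
  set q : Fin n → L := fun i => b i ^ (((j i : ℕ) + (k i : ℕ)) / p) with hq
  have key : (∏ i, b i ^ (j i : ℕ)) * (∏ i, b i ^ (k i : ℕ))
      = (∏ i, b i ^ (r i : ℕ)) * (∏ i, q i) ^ p := by
    rw [← Finset.prod_mul_distrib, ← Finset.prod_pow, ← Finset.prod_mul_distrib]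
    refine Finset.prod_congr rfl fun i _ => ?_
    rw [← pow_add, hq, ← pow_mul, ← pow_add]
    congr 1
    exact (Nat.mod_add_div' _ _).symm
  have heq : (∏ i, b i ^ (j i : ℕ)) * x j ^ p * ((∏ i, b i ^ (k i : ℕ)) * y k ^ p)
      = (∏ i, b i ^ (r i : ℕ)) * ((∏ i, q i) * (x j * y k)) ^ p := by
    rw [mul_pow, mul_pow, ← mul_assoc ((∏ i, b i ^ (r i : ℕ))), ← key]; ring
  rw [heq]
  exact pf_single p b r _

theorem pf_one_mem : (1 : L) ∈ Set.range (pfisterForm p b) := by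
  haveI : NeZero p := ⟨(Fact.out : p.Prime).ne_zero⟩
  have := pf_single p b (fun _ => 0) 1
  simpa using this

theorem pf_inv_mem {u : L} (hu : u ∈ Set.range (pfisterForm p b)) :
    u⁻¹ ∈ Set.range (pfisterForm p b) := by
  rcases eq_or_ne u 0 with rfl | h0
  · simpa using ⟨0, pf_zero p b⟩
  have hpow : ∀ m : ℕ, u ^ m ∈ Set.range (pfisterForm p b) := by
    intro m
    induction m with
    | zero => simpa using pf_one_mem p b
    | succ m ih => rw [pow_succ]; exact pf_mul_mem p b ih hu
  obtain ⟨m, hm⟩ : ∃ m, p = m + 1 := ⟨p - 1, (Nat.succ_pred_eq_of_pos (Fact.out : p.Prime).pos).symm⟩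
  have key : u ^ m * (u⁻¹) ^ p = u⁻¹ := by
    rw [hm, pow_succ, inv_pow, ← mul_assoc, mul_inv_cancel₀ (pow_ne_zero m h0), one_mul]
  rw [← key]
  exact pf_mul_mem p b (hpow m) (pf_pow_mem p b u⁻¹)

theorem pf_basis_mem (i : Fin n) : b i ∈ Set.range (pfisterForm p b) := by
  haveI : NeZero p := ⟨(Fact.out : p.Prime).ne_zero⟩
  classical
  have h := pf_single p b (Pi.single i 1) 1
  have hval : (∏ i', b i' ^ ((Pi.single i (1 : Fin p) : Fin n → Fin p) i' : ℕ)) = b i := by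
    rw [Finset.prod_eq_single i]
    · rw [Pi.single_eq_same, Fin.val_one', Nat.mod_eq_of_lt (Fact.out : p.Prime).one_lt, pow_one]
    · intro j _ hj
      rw [Pi.single_eq_of_ne hj]
      simp
    · intro hi; exact absurd (Finset.mem_univ i) hi
  rwa [hval, one_pow, mul_one] at h

end aux

/-- Over any field extension L/F, the value set of ⟨⟨a_1,...,a_n⟩⟩ equals the
subfield L^p(a_1,...,a_n) of L. -/
theorem pfister_value_set_eq_subfield
    {F L : Type*} [Field F] [Field L] [Algebra F L]
    (p n : ℕ) [Fact p.Prime] [CharP F p] [CharP L p]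
    (a : Fin n → F) (ha : ∀ i, a i ≠ 0) :
    Set.range (pfisterForm p (fun i => algebraMap F L (a i))) =
      (Subfield.closure ({y : L | ∃ c : L, c ^ p = y} ∪
        Set.range (fun i => algebraMap F L (a i))) : Set L) := by
  apply Set.Subset.antisymm
  · rintro _ ⟨x, rfl⟩
    show pfisterForm p _ x ∈ Subfield.closure _
    unfold pfisterForm
    refine sum_mem fun j _ => mul_mem ?_ ?_
    · refine prod_mem fun i _ => pow_mem ?_ _
      exact Subfield.subset_closure (Or.inr ⟨i, rfl⟩)
    · exact Subfield.subset_closure (Or.inl ⟨x j, rfl⟩)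
  · intro y hy
    refine Subfield.closure_induction (fun z hz => ?_) ?_ ?_ ?_ ?_ ?_ hy
    · rcases hz with ⟨c, hc⟩ | ⟨i, hi⟩
      · rw [← hc]; exact pf_pow_mem p _ c
      · rw [← hi]; exact pf_basis_mem p _ i
    · exact pf_one_mem p _
    · exact fun u v _ _ hu hv => pf_add_mem p _ hu hv
    · rintro u _ ⟨x, rfl⟩; exact ⟨-x, pf_neg p _ x⟩
    · exact fun u _ hu => pf_inv_mem p _ hu
    · exact fun u v _ _ hu hv => pf_mul_mem p _ hu hv
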